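/- Let (X, τ₁, τ₂) be a refined bitopological space. For any two refined regular open sets Y, Z ∈ RO₁₂(X), the set I₁((X − Y) ∪ Z) is again in RO₁₂(X) and is the relative pseudo-complement of Y and Z in RO₁₂(X), i.e., for all W ∈ RO₁₂(X): W ∩ Y ⊆ Z iff W ⊆ I₁((X − Y) ∪ Z). -/

import Mathlib

/-- For refined regular open sets `Y, Z`, the set `I₁((X \ Y) ∪ Z)` is again refined
regular open and is the relative pseudo-complement of `Y` and `Z` in `RO₁₂(X)`. -/
theorem refinedRegularOpen_himp {X : Type*} (t1 t2 : TopologicalSpace X)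
    (hsub : ∀ U : Set X, @IsOpen X t1 U → @IsOpen X t2 U)
    (Y Z : Set X)
    (hY : Y = @interior X t1 (@closure X t2 Y))
    (hZ : Z = @interior X t1 (@closure X t2 Z)) :
    (@interior X t1 (Yᶜ ∪ Z) =
      @interior X t1 (@closure X t2 (@interior X t1 (Yᶜ ∪ Z)))) ∧
    (∀ W : Set X, W = @interior X t1 (@closure X t2 W) →
      (W ∩ Y ⊆ Z ↔ W ⊆ @interior X t1 (Yᶜ ∪ Z))) := by
  set A : Set X := Yᶜ ∪ Z with hA
  set V : Set X := @interior X t1 A with hV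
  have hVopen : @IsOpen X t1 V := @isOpen_interior X t1 A
  have hYopen1 : @IsOpen X t1 Y := hY ▸ @isOpen_interior X t1 _
  have hYopen2 : @IsOpen X t2 Y := hsub Y hYopen1
  -- Part 1
  have h1 : V = @interior X t1 (@closure X t2 V) := by
    apply Set.Subset.antisymm
    · exact @interior_maximal X t1 _ V (@subset_closure X t2 V) hVopen
    · -- I₁C₂V ⊆ V; suffices I₁C₂V ⊆ A
      have key : @interior X t1 (@closure X t2 V) ⊆ A := by
        intro x hx
        by_cases hxY : x ∈ Y
        · right
          -- x ∈ U ∩ Y where U = I₁C₂V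
          have hsubC : @interior X t1 (@closure X t2 V) ⊆ @closure X t2 V :=
            @interior_subset X t1 _
          have h2 : x ∈ Y ∩ @closure X t2 V := ⟨hxY, hsubC hx⟩
          have h3 : Y ∩ @closure X t2 V ⊆ @closure X t2 (Y ∩ V) :=
            @IsOpen.inter_closure X t2 Y V hYopen2
          have h4 : Y ∩ V ⊆ Z := by
            intro y ⟨hy1, hy2⟩
            rcases (@interior_subset X t1 A) hy2 with h | h
            · exact absurd hy1 h
            · exact h
          have hm : @closure X t2 (Y ∩ V) ⊆ @closure X t2 Z :=
            @closure_mono X t2 _ _ h4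
          have h5 : x ∈ @closure X t2 Z := hm (h3 h2)
          have hopen : @IsOpen X t1 (@interior X t1 (@closure X t2 V) ∩ Y) :=
            @IsOpen.inter X t1 _ _ (@isOpen_interior X t1 _) hYopen1
          have h6 : @interior X t1 (@closure X t2 V) ∩ Y ⊆ @closure X t2 Z := by
            intro y ⟨hy1, hy2⟩
            exact hm (h3 ⟨hy2, hsubC hy1⟩)
          have h7 : @interior X t1 (@closure X t2 V) ∩ Y ⊆
              @interior X t1 (@closure X t2 Z) :=
            @interior_maximal X t1 _ _ h6 hopen
          rw [← hZ] at h7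
          exact h7 ⟨hx, hxY⟩
        · left; exact hxY
      exact @interior_maximal X t1 A _ key (@isOpen_interior X t1 _)
  refine ⟨h1, fun W hW => ?_⟩
  have hWopen : @IsOpen X t1 W := hW ▸ @isOpen_interior X t1 _
  constructor
  · intro h
    have : W ⊆ A := by
      intro x hx
      by_cases hxY : x ∈ Y
      · exact Or.inr (h ⟨hx, hxY⟩)
      · exact Or.inl hxY
    exact @interior_maximal X t1 A W this hWopen
  · intro h x ⟨hx1, hx2⟩
    rcases (@interior_subset X t1 A) (h hx1) with hc | hc
    · exact absurd hx2 hc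
    · exact hc
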